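/- Gibbs/variational inequality for Perron eigenvectors: let E = (e^{a_{ij}}) be the entrywise exponential of a k×k real matrix A, let v be a left eigenvector with positive entries satisfying ∑_i v_i e^{a_{ij}} = β v_j for all j (β > 0), let Q = (q_{ij}) be a column-stochastic matrix with positive entries and π a probability vector with Qπ = π. Then -∑_j π_j ∑_i q_{ij} log q_{ij} + ∑_j π_j ∑_i q_{ij} a_{ij} ≤ log β. -/

import Mathlib

open Real

theorem stmt18 (k : ℕ) (A : Matrix (Fin k) (Fin k) ℝ)
    (v : Fin k → ℝ) (hv : ∀ i, 0 < v i)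
    (β : ℝ) (hβ : 0 < β)
    (heig : ∀ j, ∑ i, v i * Real.exp (A i j) = β * v j)
    (Q : Matrix (Fin k) (Fin k) ℝ) (hQ : ∀ i j, 0 < Q i j)
    (hQcol : ∀ j, ∑ i, Q i j = 1)
    (pv : Fin k → ℝ) (hpv : ∀ j, 0 ≤ pv j) (hpvsum : ∑ j, pv j = 1)
    (hstat : ∀ i, ∑ j, Q i j * pv j = pv i) :
    -∑ j, pv j * ∑ i, Q i j * Real.log (Q i j)
      + ∑ j, pv j * ∑ i, Q i j * A i j ≤ Real.log β := by
  -- pointwise Gibbs inequality for each column j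
  have hfj : ∀ j, ∑ i, Q i j * (Real.log (v i) + A i j - Real.log (Q i j)
      - (Real.log β + Real.log (v j))) ≤ 0 := by
    intro j
    have hbv : 0 < β * v j := mul_pos hβ (hv j)
    have key : ∀ i ∈ Finset.univ, Q i j * (Real.log (v i) + A i j - Real.log (Q i j)
        - (Real.log β + Real.log (v j)))
        ≤ v i * Real.exp (A i j) / (β * v j) - Q i j := by
      intro i _
      have hq := hQ i j
      have hr : 0 < v i * Real.exp (A i j) / (Q i j * (β * v j)) :=
        div_pos (mul_pos (hv i) (Real.exp_pos _)) (mul_pos hq hbv)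
      have hlog := Real.log_le_sub_one_of_pos hr
      have hlogeq : Real.log (v i * Real.exp (A i j) / (Q i j * (β * v j)))
          = Real.log (v i) + A i j - Real.log (Q i j) - (Real.log β + Real.log (v j)) := by
        rw [Real.log_div (mul_pos (hv i) (Real.exp_pos _)).ne' (mul_pos hq hbv).ne',
          Real.log_mul (hv i).ne' (Real.exp_ne_zero _), Real.log_exp,
          Real.log_mul hq.ne' hbv.ne', Real.log_mul hβ.ne' (hv j).ne']
        ring
      calc Q i j * (Real.log (v i) + A i j - Real.log (Q i j)
            - (Real.log β + Real.log (v j)))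
          = Q i j * Real.log (v i * Real.exp (A i j) / (Q i j * (β * v j))) := by
            rw [hlogeq]
        _ ≤ Q i j * (v i * Real.exp (A i j) / (Q i j * (β * v j)) - 1) :=
            mul_le_mul_of_nonneg_left hlog hq.le
        _ = v i * Real.exp (A i j) / (β * v j) - Q i j := by
            field_simp
    calc ∑ i, Q i j * (Real.log (v i) + A i j - Real.log (Q i j)
          - (Real.log β + Real.log (v j)))
        ≤ ∑ i, (v i * Real.exp (A i j) / (β * v j) - Q i j) := Finset.sum_le_sum key
      _ = (∑ i, v i * Real.exp (A i j)) / (β * v j) - ∑ i, Q i j := by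
          rw [Finset.sum_sub_distrib, Finset.sum_div]
      _ = 0 := by rw [heig j, hQcol j, div_self hbv.ne']; ring
  have hS : ∑ j, pv j * ∑ i, Q i j * (Real.log (v i) + A i j - Real.log (Q i j)
      - (Real.log β + Real.log (v j))) ≤ 0 :=
    Finset.sum_nonpos fun j _ => mul_nonpos_of_nonneg_of_nonpos (hpv j) (hfj j)
  -- expand the sum
  have expand : ∑ j, pv j * ∑ i, Q i j * (Real.log (v i) + A i j - Real.log (Q i j)
      - (Real.log β + Real.log (v j)))
      = (∑ j, pv j * ∑ i, Q i j * Real.log (v i))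
        + (∑ j, pv j * ∑ i, Q i j * A i j)
        - (∑ j, pv j * ∑ i, Q i j * Real.log (Q i j))
        - (∑ j, pv j * (Real.log β + Real.log (v j))) := by
    rw [← Finset.sum_add_distrib, ← Finset.sum_sub_distrib, ← Finset.sum_sub_distrib]
    refine Finset.sum_congr rfl fun j _ => ?_
    have : ∑ i, Q i j * (Real.log (v i) + A i j - Real.log (Q i j)
        - (Real.log β + Real.log (v j)))
        = (∑ i, Q i j * Real.log (v i)) + (∑ i, Q i j * A i j)
          - (∑ i, Q i j * Real.log (Q i j)) - (∑ i, Q i j) * (Real.log β + Real.log (v j)) := by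
      rw [← Finset.sum_add_distrib, ← Finset.sum_sub_distrib, Finset.sum_mul,
        ← Finset.sum_sub_distrib]
      exact Finset.sum_congr rfl fun i _ => by ring
    rw [this, hQcol j]
    ring
  have hT1 : ∑ j, pv j * ∑ i, Q i j * Real.log (v i) = ∑ j, pv j * Real.log (v j) := by
    calc ∑ j, pv j * ∑ i, Q i j * Real.log (v i)
        = ∑ j, ∑ i, Real.log (v i) * (Q i j * pv j) := by
          refine Finset.sum_congr rfl fun j _ => ?_
          rw [Finset.mul_sum]
          exact Finset.sum_congr rfl fun i _ => by ring
      _ = ∑ i, Real.log (v i) * ∑ j, Q i j * pv j := by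
          rw [Finset.sum_comm]
          exact Finset.sum_congr rfl fun i _ => (Finset.mul_sum _ _ _).symm
      _ = ∑ j, pv j * Real.log (v j) := by
          refine Finset.sum_congr rfl fun i _ => ?_
          rw [hstat i]; ring
  have hT4 : ∑ j, pv j * (Real.log β + Real.log (v j))
      = Real.log β + ∑ j, pv j * Real.log (v j) := by
    have h : ∀ j ∈ Finset.univ, pv j * (Real.log β + Real.log (v j))
        = Real.log β * pv j + pv j * Real.log (v j) := fun j _ => by ring
    rw [Finset.sum_congr rfl h, Finset.sum_add_distrib, ← Finset.mul_sum, hpvsum, mul_one]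
  rw [expand, hT1, hT4] at hS
  linarith
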